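/- Let w ∈ S_n avoid the patterns 3412 and 4231, and let s = (l, l+1) be a simple transposition with sw < w < ws in Bruhat order. Then there is at most one permutation z with z ≤ w, ℓ(z) = ℓ(w) − 1, and zs < z. -/

import Mathlib

open Equiv

/-- `rk w i j` = #{k ≤ i : w(k) ≤ j} (1-indexed), for `w ∈ S_n`. -/
def rk {n : ℕ} (w : Equiv.Perm (Fin n)) (i j : ℕ) : ℕ :=
  (Finset.univ.filter (fun k : Fin n => (k : ℕ) + 1 ≤ i ∧ (w k : ℕ) + 1 ≤ j)).card

/-- Bruhat order on `S_n` via the rank-matrix criterion: `z ≤ w` iff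
`r_{i,j}(z) ≥ r_{i,j}(w)` for all `i,j`. -/
def BruhatLE {n : ℕ} (z w : Equiv.Perm (Fin n)) : Prop :=
  ∀ i ≤ n, ∀ j ≤ n, rk w i j ≤ rk z i j

def BruhatLT {n : ℕ} (z w : Equiv.Perm (Fin n)) : Prop :=
  BruhatLE z w ∧ z ≠ w

/-- Coxeter length = number of inversions. -/
def len {n : ℕ} (w : Equiv.Perm (Fin n)) : ℕ :=
  (Finset.univ.filter (fun p : Fin n × Fin n => p.1 < p.2 ∧ w p.2 < w p.1)).card

/-- One-line notation of `w`, 1-indexed, extended by the identity outside `[1,n]`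
(so that `w(n+1) = n+1`). -/
def ol {n : ℕ} (w : Equiv.Perm (Fin n)) (k : ℕ) : ℕ :=
  if h : 1 ≤ k ∧ k ≤ n then ((w ⟨k - 1, by omega⟩ : Fin n) : ℕ) + 1 else k

/-- The coessential set of `w` (1-indexed pairs). -/
def Coess {n : ℕ} (w : Equiv.Perm (Fin n)) : Set (ℕ × ℕ) :=
  {p | 1 ≤ p.1 ∧ p.1 ≤ n ∧ 1 ≤ p.2 ∧ p.2 ≤ n ∧
    ol w p.1 ≤ p.2 ∧ p.2 < ol w (p.1 + 1) ∧
    ol w⁻¹ p.2 ≤ p.1 ∧ p.1 < ol w⁻¹ (p.2 + 1)}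

/-- `w` contains the pattern 312. -/
def Has312 {n : ℕ} (w : Equiv.Perm (Fin n)) : Prop :=
  ∃ a b c : Fin n, a < b ∧ b < c ∧ w b < w c ∧ w c < w a

/-- `w` contains the pattern 3412. -/
def Has3412 {n : ℕ} (w : Equiv.Perm (Fin n)) : Prop :=
  ∃ a b c d : Fin n, a < b ∧ b < c ∧ c < d ∧ w c < w d ∧ w d < w a ∧ w a < w b

/-- `w` contains the pattern 4231. -/
def Has4231 {n : ℕ} (w : Equiv.Perm (Fin n)) : Prop :=
  ∃ a b c d : Fin n, a < b ∧ b < c ∧ c < d ∧ w d < w b ∧ w b < w c ∧ w c < w a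

/-- `w` is smooth iff it avoids 3412 and 4231. -/
def SmoothPerm {n : ℕ} (w : Equiv.Perm (Fin n)) : Prop := ¬ Has3412 w ∧ ¬ Has4231 w

/-- `w` is codominant iff `i ≤ j` for every `(i,j)` in the coessential set. -/
def Codominant {n : ℕ} (w : Equiv.Perm (Fin n)) : Prop :=
  ∀ p ∈ Coess w, p.1 ≤ p.2

/-- Lexicographic comparison on one-line notations. -/
def LexLe {n : ℕ} (u w : Equiv.Perm (Fin n)) : Prop :=
  u = w ∨ ∃ i : Fin n, (∀ j < i, u j = w j) ∧ u i < w i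

/-- `m` is a Hessenberg function (0-indexed): non-decreasing and `m i ≥ i`. -/
def Hess {n : ℕ} (m : Fin n → Fin n) : Prop :=
  Monotone m ∧ ∀ i, i ≤ m i

/-- `w` is the lexicographically greatest permutation with `w i ≤ m i` for all `i`. -/
def IsLexMax {n : ℕ} (m : Fin n → Fin n) (w : Equiv.Perm (Fin n)) : Prop :=
  (∀ i, w i ≤ m i) ∧ ∀ u : Equiv.Perm (Fin n), (∀ i, u i ≤ m i) → LexLe u w

instance {n : ℕ} (z w : Equiv.Perm (Fin n)) : Decidable (BruhatLE z w) := by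
  unfold BruhatLE; exact Nat.decidableBallLE _ _



open Finset

namespace S4
variable {n : ℕ}

variable {n : ℕ}

lemma rk_succ (w : Perm (Fin n)) (i : Fin n) (j : ℕ) :
    rk w ((i:ℕ)+1) j = rk w i j + if (w i:ℕ)+1 ≤ j then 1 else 0 := by
  unfold rk
  split_ifs with h
  · rw [← Finset.card_insert_of_notMem (s := Finset.univ.filter
      (fun k : Fin n => (k : ℕ) + 1 ≤ (i:ℕ) ∧ (w k : ℕ) + 1 ≤ j)) (a := i)
      (by simp only [Finset.mem_filter, Finset.mem_univ, true_and]; omega)]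
    apply congrArg Finset.card
    ext k
    simp only [Finset.mem_filter, Finset.mem_univ, true_and, Finset.mem_insert]
    constructor
    · rintro ⟨hk1, hk2⟩
      by_cases hki : k = i
      · exact Or.inl hki
      · have : (k:ℕ) ≠ (i:ℕ) := fun hc => hki (Fin.ext hc)
        exact Or.inr ⟨by omega, hk2⟩
    · rintro (rfl | ⟨hk1, hk2⟩)
      · exact ⟨by omega, h⟩
      · exact ⟨by omega, hk2⟩
  · rw [add_zero]
    apply congrArg Finset.card
    ext k
    simp only [Finset.mem_filter, Finset.mem_univ, true_and]
    constructor
    · rintro ⟨hk1, hk2⟩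
      refine ⟨?_, hk2⟩
      by_cases hki : k = i
      · subst hki; omega
      · have : (k:ℕ) ≠ (i:ℕ) := fun hc => hki (Fin.ext hc)
        omega
    · rintro ⟨hk1, hk2⟩
      exact ⟨by omega, hk2⟩

/-- rk is unchanged under right mult by adjacent swap, for rows `i ≤ a` or `i ≥ a+2`. -/
lemma rk_mul_adjswap (u : Perm (Fin n)) (a : Fin n) (ha : (a:ℕ)+1 < n) (i j : ℕ)
    (hi : i ≤ (a:ℕ) ∨ (a:ℕ)+2 ≤ i) :
    rk (u * Equiv.swap a ⟨(a:ℕ)+1, ha⟩) i j = rk u i j := by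
  unfold rk
  rcases hi with hi | hi
  · apply congrArg Finset.card
    ext k
    simp only [Finset.mem_filter, Finset.mem_univ, true_and]
    simp only [Perm.mul_apply]
    have hk : ∀ (h : (k:ℕ)+1 ≤ i), (Equiv.swap a ⟨(a:ℕ)+1, ha⟩) k = k := by
      intro h
      apply Equiv.swap_apply_of_ne_of_ne
      · intro hc; subst hc; omega
      · intro hc
        have : (k:ℕ) = (a:ℕ)+1 := by rw [hc]
        omega
    constructor
    · rintro ⟨h1, h2⟩; rw [hk h1] at h2; exact ⟨h1, h2⟩
    · rintro ⟨h1, h2⟩; rw [hk h1]; exact ⟨h1, h2⟩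
  · have key : ∀ k : Fin n, (k:ℕ)+1 ≤ i →
        (((Equiv.swap a ⟨(a:ℕ)+1, ha⟩) k : Fin n) : ℕ)+1 ≤ i := by
      intro k hk
      by_cases h1 : k = a
      · rw [h1, Equiv.swap_apply_left]; show (a:ℕ)+1+1 ≤ i; omega
      · by_cases h2 : k = ⟨(a:ℕ)+1, ha⟩
        · rw [h2, Equiv.swap_apply_right]; omega
        · rw [Equiv.swap_apply_of_ne_of_ne h1 h2]; exact hk
    apply Finset.card_bij' (fun k _ => (Equiv.swap a ⟨(a:ℕ)+1, ha⟩) k)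
      (fun k _ => (Equiv.swap a ⟨(a:ℕ)+1, ha⟩) k)
    · intro k hk
      simp only [Finset.mem_filter, Finset.mem_univ, true_and] at hk ⊢
      simp only [Perm.mul_apply] at hk ⊢
      exact ⟨key k hk.1, hk.2⟩
    · intro k hk
      simp only [Finset.mem_filter, Finset.mem_univ, true_and] at hk ⊢
      simp only [Perm.mul_apply] at hk ⊢
      refine ⟨key k hk.1, ?_⟩
      rw [Equiv.swap_apply_self]
      exact hk.2
    · intro k _; rw [Equiv.swap_apply_self]
    · intro k _; rw [Equiv.swap_apply_self]

lemma rk_mul_adjswap_row (u : Perm (Fin n)) (a : Fin n) (ha : (a:ℕ)+1 < n) (j : ℕ) :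
    rk (u * Equiv.swap a ⟨(a:ℕ)+1, ha⟩) ((a:ℕ)+1) j
      = rk u (a:ℕ) j + if (u ⟨(a:ℕ)+1, ha⟩ : ℕ)+1 ≤ j then 1 else 0 := by
  have h1 := rk_succ (u * Equiv.swap a ⟨(a:ℕ)+1, ha⟩) a j
  have h2 : (u * Equiv.swap a ⟨(a:ℕ)+1, ha⟩) a = u ⟨(a:ℕ)+1, ha⟩ := by
    simp [Perm.mul_apply, Equiv.swap_apply_left]
  rw [h2] at h1
  rw [h1, rk_mul_adjswap u a ha a j (Or.inl le_rfl)]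


variable {n : ℕ}

def Inv (w : Perm (Fin n)) : Finset (Fin n × Fin n) :=
  Finset.univ.filter (fun p : Fin n × Fin n => p.1 < p.2 ∧ w p.2 < w p.1)

lemma len_eq_card (w : Perm (Fin n)) : len w = (Inv w).card := rfl

lemma mem_Inv {w : Perm (Fin n)} {p : Fin n × Fin n} :
    p ∈ Inv w ↔ p.1 < p.2 ∧ w p.2 < w p.1 := by
  simp [Inv]

section Swap
variable (w : Perm (Fin n)) (i j : Fin n) (hij : i < j)

local notation "t" => Equiv.swap i j

def phi (p : Fin n × Fin n) : Fin n × Fin n :=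
  if (t) p.1 < (t) p.2 then ((t) p.1, (t) p.2) else p

variable {w i j}

lemma tapp_ne {x : Fin n} (h1 : x ≠ i) (h2 : x ≠ j) : (t) x = x :=
  Equiv.swap_apply_of_ne_of_ne h1 h2

lemma phi_then_mem {p : Fin n × Fin n} (hp : p ∈ Inv (w * t))
    (h : (t) p.1 < (t) p.2) : ((t) p.1, (t) p.2) ∈ Inv w := by
  rw [mem_Inv] at hp ⊢
  exact ⟨h, hp.2⟩

lemma phi_else (hij : i < j) {p : Fin n × Fin n} (hp : p ∈ Inv (w * t))
    (h : ¬ (t) p.1 < (t) p.2) :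
    (p.1 = i ∧ i < p.2 ∧ p.2 < j ∧ w p.2 < w j) ∨
    (p.2 = j ∧ i < p.1 ∧ p.1 < j ∧ w i < w p.1) ∨
    (p.1 = i ∧ p.2 = j ∧ w i < w j) := by
  rw [mem_Inv] at hp
  obtain ⟨hlt, hval⟩ := hp
  simp only [Perm.mul_apply] at hval
  by_cases h1 : p.1 = i
  · by_cases h2 : p.2 = j
    · right; right
      refine ⟨h1, h2, ?_⟩
      rw [h1, h2, Equiv.swap_apply_left, Equiv.swap_apply_right] at hval
      exact hval
    · left
      have h2i : p.2 ≠ i := by intro hc; rw [h1, hc] at hlt; exact lt_irrefl _ hlt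
      have ht2 : (t) p.2 = p.2 := tapp_ne h2i h2
      have ht1 : (t) p.1 = j := by rw [h1, Equiv.swap_apply_left]
      rw [ht1, ht2] at h hval
      refine ⟨h1, by rw [← h1]; exact hlt, ?_, hval⟩
      rcases lt_trichotomy p.2 j with hc | hc | hc
      · exact hc
      · exact absurd hc h2
      · exact absurd hc h
  · by_cases h2 : p.2 = j
    · right; left
      have h1j : p.1 ≠ j := by intro hc; rw [hc, h2] at hlt; exact lt_irrefl _ hlt
      have ht1 : (t) p.1 = p.1 := tapp_ne h1 h1j
      have ht2 : (t) p.2 = i := by rw [h2, Equiv.swap_apply_right]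
      rw [ht1, ht2] at h hval
      refine ⟨h2, ?_, by rw [← h2]; exact hlt, hval⟩
      rcases lt_trichotomy i p.1 with hc | hc | hc
      · exact hc
      · exact absurd hc.symm h1
      · exact absurd hc h
    · exfalso
      by_cases h1j : p.1 = j
      · have h2i : p.2 ≠ i := fun hc => (by rw [h1j, hc] at hlt; exact absurd (hij.trans hlt) (lt_irrefl _) : False)
        have ht1 : (t) p.1 = i := by rw [h1j, Equiv.swap_apply_right]
        have ht2 : (t) p.2 = p.2 := tapp_ne h2i h2
        rw [ht1, ht2] at h
        exact h (lt_of_le_of_lt hij.le (h1j ▸ hlt))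
      · by_cases h2i : p.2 = i
        · have ht1 : (t) p.1 = p.1 := tapp_ne h1 h1j
          have ht2 : (t) p.2 = j := by rw [h2i, Equiv.swap_apply_left]
          rw [ht1, ht2] at h
          exact h (hlt.trans (h2i ▸ hij))
        · rw [tapp_ne h1 h1j, tapp_ne h2i h2] at h
          exact h hlt
end Swap
section Swap2
variable {w : Perm (Fin n)} {i j : Fin n}

local notation "t" => Equiv.swap i j

lemma phi_injOn (hij : i < j) : Set.InjOn (phi i j) (Inv (w * t)) := by
  intro x hx y hy hxy
  unfold phi at hxy
  split_ifs at hxy with hx' hy' hy'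
  · have := Prod.ext_iff.mp hxy
    exact Prod.ext ((Equiv.injective t) this.1) ((Equiv.injective t) this.2)
  · -- x then-branch, y else-branch : (t x.1, t x.2) = y
    exfalso
    rcases phi_else hij hy hy' with ⟨e1, e2, e3, _⟩ | ⟨e1, e2, e3, _⟩ | ⟨e1, e2, _⟩
    · -- y = (i, y.2), i < y.2 < j; x.1 = t i = j, x.2 = t y.2 = y.2
      have hx1 : x.1 = (t) y.1 := by
        rw [← (Prod.ext_iff.mp hxy).1, Equiv.swap_apply_self]
      have hx2 : x.2 = (t) y.2 := by
        rw [← (Prod.ext_iff.mp hxy).2, Equiv.swap_apply_self]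
      have h1 : x.1 = j := by rw [hx1, e1, Equiv.swap_apply_left]
      have h2 : x.2 = y.2 := by
        rw [hx2]
        exact tapp_ne (fun hc => absurd (hc ▸ e2) (lt_irrefl _)) (fun hc => absurd (hc ▸ e3) (lt_irrefl _))
      have := (mem_Inv.mp hx).1
      rw [h1, h2] at this
      exact absurd (this.trans e3) (lt_irrefl _)
    · -- y = (y.1, j), i < y.1 < j; x = (y.1, i)
      have hx1 : x.1 = (t) y.1 := by
        rw [← (Prod.ext_iff.mp hxy).1, Equiv.swap_apply_self]
      have hx2 : x.2 = (t) y.2 := by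
        rw [← (Prod.ext_iff.mp hxy).2, Equiv.swap_apply_self]
      have h1 : x.1 = y.1 := by
        rw [hx1]
        exact tapp_ne (fun hc => absurd (hc ▸ e2) (lt_irrefl _)) (fun hc => absurd (hc ▸ e3) (lt_irrefl _))
      have h2 : x.2 = i := by rw [hx2, e1, Equiv.swap_apply_right]
      have := (mem_Inv.mp hx).1
      rw [h1, h2] at this
      exact absurd (e2.trans this) (lt_irrefl _)
    · -- y = (i,j); x = (j,i) not sorted
      have hx1 : x.1 = (t) y.1 := by
        rw [← (Prod.ext_iff.mp hxy).1, Equiv.swap_apply_self]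
      have hx2 : x.2 = (t) y.2 := by
        rw [← (Prod.ext_iff.mp hxy).2, Equiv.swap_apply_self]
      have h1 : x.1 = j := by rw [hx1, e1, Equiv.swap_apply_left]
      have h2 : x.2 = i := by rw [hx2, e2, Equiv.swap_apply_right]
      have := (mem_Inv.mp hx).1
      rw [h1, h2] at this
      exact absurd (hij.trans this) (lt_irrefl _)
  · -- x else, y then : x = (t y.1, t y.2)
    exfalso
    rcases phi_else hij hx hx' with ⟨e1, e2, e3, _⟩ | ⟨e1, e2, e3, _⟩ | ⟨e1, e2, _⟩
    · have hy1 : y.1 = (t) x.1 := by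
        rw [(Prod.ext_iff.mp hxy).1, Equiv.swap_apply_self]
      have hy2 : y.2 = (t) x.2 := by
        rw [(Prod.ext_iff.mp hxy).2, Equiv.swap_apply_self]
      have h1 : y.1 = j := by rw [hy1, e1, Equiv.swap_apply_left]
      have h2 : y.2 = x.2 := by
        rw [hy2]
        exact tapp_ne (fun hc => absurd (hc ▸ e2) (lt_irrefl _)) (fun hc => absurd (hc ▸ e3) (lt_irrefl _))
      have := (mem_Inv.mp hy).1
      rw [h1, h2] at this
      exact absurd (this.trans e3) (lt_irrefl _)
    · have hy1 : y.1 = (t) x.1 := by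
        rw [(Prod.ext_iff.mp hxy).1, Equiv.swap_apply_self]
      have hy2 : y.2 = (t) x.2 := by
        rw [(Prod.ext_iff.mp hxy).2, Equiv.swap_apply_self]
      have h1 : y.1 = x.1 := by
        rw [hy1]
        exact tapp_ne (fun hc => absurd (hc ▸ e2) (lt_irrefl _)) (fun hc => absurd (hc ▸ e3) (lt_irrefl _))
      have h2 : y.2 = i := by rw [hy2, e1, Equiv.swap_apply_right]
      have := (mem_Inv.mp hy).1
      rw [h1, h2] at this
      exact absurd (e2.trans this) (lt_irrefl _)
    · have hy1 : y.1 = (t) x.1 := by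
        rw [(Prod.ext_iff.mp hxy).1, Equiv.swap_apply_self]
      have hy2 : y.2 = (t) x.2 := by
        rw [(Prod.ext_iff.mp hxy).2, Equiv.swap_apply_self]
      have h1 : y.1 = j := by rw [hy1, e1, Equiv.swap_apply_left]
      have h2 : y.2 = i := by rw [hy2, e2, Equiv.swap_apply_right]
      have := (mem_Inv.mp hy).1
      rw [h1, h2] at this
      exact absurd (hij.trans this) (lt_irrefl _)
  · exact hxy

end Swap2
section Swap3
variable {w : Perm (Fin n)} {i j : Fin n}

local notation "t" => Equiv.swap i j

lemma phi_maps_descent (hij : i < j) (hw : w j < w i) :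
    ∀ p ∈ Inv (w * t), phi i j p ∈ Inv w := by
  intro p hp
  unfold phi
  split_ifs with h
  · exact phi_then_mem hp h
  · rcases phi_else hij hp h with ⟨e1, e2, e3, e4⟩ | ⟨e1, e2, e3, e4⟩ | ⟨e1, e2, e3⟩
    · exact mem_Inv.mpr ⟨(mem_Inv.mp hp).1, by rw [e1]; exact e4.trans hw⟩
    · exact mem_Inv.mpr ⟨(mem_Inv.mp hp).1, by rw [e1]; exact hw.trans e4⟩
    · exact absurd e3 (not_lt.mpr hw.le)

lemma phi_ne_pair (hij : i < j) {p : Fin n × Fin n} (hp : p ∈ Inv (w * t))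
    {a b : Fin n} (hab : a < b)
    (hthen : ¬ ((t) a < (t) b))
    (helse : ¬ ((w * t) b < (w * t) a)) : phi i j p ≠ (a, b) := by
  unfold phi
  split_ifs with h
  · intro heq
    have e1 : (t) p.1 = a := congrArg Prod.fst heq
    have e2 : (t) p.2 = b := congrArg Prod.snd heq
    have f1 : p.1 = (t) a := by rw [← e1, Equiv.swap_apply_self]
    have f2 : p.2 = (t) b := by rw [← e2, Equiv.swap_apply_self]
    have := (mem_Inv.mp hp).1
    rw [f1, f2] at this
    exact hthen this
  · intro heq
    have := (mem_Inv.mp hp).2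
    rw [heq] at this
    exact helse this

lemma phi_ne_ij (hij : i < j) (hw : w j < w i) {p : Fin n × Fin n}
    (hp : p ∈ Inv (w * t)) : phi i j p ≠ (i, j) := by
  apply phi_ne_pair hij hp hij
  · rw [Equiv.swap_apply_left, Equiv.swap_apply_right]
    exact not_lt.mpr hij.le
  · simp only [Perm.mul_apply, Equiv.swap_apply_left, Equiv.swap_apply_right]
    exact not_lt.mpr hw.le

lemma len_lt_of_descent (hij : i < j) (hw : w j < w i) : len (w * t) < len w := by
  have hmem : (i, j) ∈ Inv w := mem_Inv.mpr ⟨hij, hw⟩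
  have h1 : (Inv (w * t)).card ≤ (Inv w \ {(i, j)}).card := by
    apply Finset.card_le_card_of_injOn (phi i j)
    · intro p hp
      rw [Finset.mem_coe, Finset.mem_sdiff, Finset.mem_singleton]
      exact ⟨phi_maps_descent hij hw p hp, phi_ne_ij hij hw hp⟩
    · exact phi_injOn hij
  have h2 : (Inv w \ {(i, j)}).card = (Inv w).card - 1 := by
    rw [Finset.card_sdiff_of_subset (Finset.singleton_subset_iff.mpr hmem), Finset.card_singleton]
  have h3 : 1 ≤ (Inv w).card := Finset.card_pos.mpr ⟨_, hmem⟩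
  rw [len_eq_card, len_eq_card]
  omega

lemma len_lt3_of_descent (hij : i < j) (hw : w j < w i) (k : Fin n)
    (hik : i < k) (hkj : k < j) (h1 : w j < w k) (h2 : w k < w i) :
    len (w * t) + 2 < len w := by
  classical
  have hij' : (i:ℕ) < (j:ℕ) := hij
  have hik' : (i:ℕ) < (k:ℕ) := hik
  have hkj' : (k:ℕ) < (j:ℕ) := hkj
  set S : Finset (Fin n × Fin n) := {(i, j), (i, k), (k, j)} with hS
  have hsub : S ⊆ Inv w := by
    intro p hp
    simp only [hS, Finset.mem_insert, Finset.mem_singleton] at hp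
    rcases hp with rfl | rfl | rfl
    · exact mem_Inv.mpr ⟨hij, hw⟩
    · exact mem_Inv.mpr ⟨hik, h2⟩
    · exact mem_Inv.mpr ⟨hkj, h1⟩
  have m1 : ((i,j) : Fin n × Fin n) ∉ ({(i,k),(k,j)} : Finset (Fin n × Fin n)) := by
    simp only [Finset.mem_insert, Finset.mem_singleton, Prod.mk.injEq, Fin.ext_iff, not_or,
      not_and]
    omega
  have m2 : ((i,k) : Fin n × Fin n) ∉ ({(k,j)} : Finset (Fin n × Fin n)) := by
    simp only [Finset.mem_singleton, Prod.mk.injEq, Fin.ext_iff, not_and]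
    omega
  have hcard : S.card = 3 := by
    rw [hS, Finset.card_insert_of_notMem m1, Finset.card_insert_of_notMem m2,
      Finset.card_singleton]
  have hmaps : ∀ p ∈ Inv (w * t), phi i j p ∈ Inv w \ S := by
    intro p hp
    rw [Finset.mem_sdiff]
    refine ⟨phi_maps_descent hij hw p hp, ?_⟩
    simp only [hS, Finset.mem_insert, Finset.mem_singleton, not_or]
    have hneik : (t) k = k := tapp_ne (fun hc => absurd (hc ▸ hik) (lt_irrefl _))
      (fun hc => absurd (hc ▸ hkj) (lt_irrefl _))
    refine ⟨phi_ne_ij hij hw hp, ?_, ?_⟩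
    · apply phi_ne_pair hij hp hik
      · rw [Equiv.swap_apply_left, hneik]
        exact not_lt.mpr hkj.le
      · simp only [Perm.mul_apply, Equiv.swap_apply_left]
        rw [hneik]
        exact not_lt.mpr h1.le
    · apply phi_ne_pair hij hp hkj
      · rw [Equiv.swap_apply_right, hneik]
        exact not_lt.mpr hik.le
      · simp only [Perm.mul_apply, Equiv.swap_apply_right]
        rw [hneik]
        exact not_lt.mpr h2.le
  have hle : (Inv (w * t)).card ≤ (Inv w \ S).card :=
    Finset.card_le_card_of_injOn (phi i j) hmaps (phi_injOn hij)
  have h2' : (Inv w \ S).card = (Inv w).card - 3 := by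
    rw [Finset.card_sdiff_of_subset hsub, hcard]
  have h3 : 3 ≤ (Inv w).card := hcard ▸ Finset.card_le_card hsub
  rw [len_eq_card, len_eq_card]
  omega

lemma len_lt_of_ascent (hij : i < j) (hw : w i < w j) : len w < len (w * t) := by
  have h1 : (w * t) j < (w * t) i := by
    simp only [Perm.mul_apply, Equiv.swap_apply_left, Equiv.swap_apply_right]
    exact hw
  have h2 := len_lt_of_descent (w := w * t) hij h1
  rwa [mul_assoc, Equiv.swap_mul_self, mul_one] at h2

end Swap3
section Adj
variable {u : Perm (Fin n)} {a b : Fin n}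

lemma len_mul_adj_le (hab : a < b) (hadj : (b:ℕ) = (a:ℕ) + 1) (u : Perm (Fin n)) :
    len (u * Equiv.swap a b) ≤ len u + 1 := by
  classical
  have h1 : (Inv (u * Equiv.swap a b)).card ≤ (insert (a,b) (Inv u)).card := by
    apply Finset.card_le_card_of_injOn (phi a b)
    · intro p hp
      unfold phi
      split_ifs with h
      · exact Finset.mem_insert_of_mem (phi_then_mem hp h)
      · rcases phi_else hab hp h with ⟨e1, e2, e3, _⟩ | ⟨e1, e2, e3, _⟩ | ⟨e1, e2, _⟩
        · exfalso
          have h2 : (a:ℕ) < (p.2:ℕ) := e2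
          have h3 : (p.2:ℕ) < (b:ℕ) := e3
          omega
        · exfalso
          have h2 : (a:ℕ) < (p.1:ℕ) := e2
          have h3 : (p.1:ℕ) < (b:ℕ) := e3
          omega
        · rw [show p = (a, b) from Prod.ext e1 e2]
          exact Finset.mem_insert_self _ _
    · exact phi_injOn hab
  have h2 := Finset.card_insert_le ((a,b) : Fin n × Fin n) (Inv u)
  rw [len_eq_card, len_eq_card]
  omega

lemma len_mul_adj_descent (hab : a < b) (hadj : (b:ℕ) = (a:ℕ) + 1)
    (hd : u b < u a) : len (u * Equiv.swap a b) + 1 = len u := by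
  have le1 : len (u * Equiv.swap a b) < len u := len_lt_of_descent hab hd
  have le2 := len_mul_adj_le hab hadj (u * Equiv.swap a b)
  rw [mul_assoc, Equiv.swap_mul_self, mul_one] at le2
  omega

lemma len_mul_adj_ascent (hab : a < b) (hadj : (b:ℕ) = (a:ℕ) + 1)
    (hasc : u a < u b) : len (u * Equiv.swap a b) = len u + 1 := by
  have le1 : len u < len (u * Equiv.swap a b) := len_lt_of_ascent hab hasc
  have le2 := len_mul_adj_le hab hadj u
  omega

end Adj

variable {n : ℕ}

lemma perm_eq_one_of_le (u : Perm (Fin n)) (h : ∀ i : Fin n, (u i : ℕ) ≤ (i : ℕ)) :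
    u = 1 := by
  have key : ∀ m : ℕ, ∀ i : Fin n, (i:ℕ) = m → u i = i := by
    intro m
    induction m using Nat.strong_induction_on with
    | _ m ih =>
      intro i him
      rcases lt_or_eq_of_le (h i) with hlt | heq
      · exfalso
        set v : ℕ := (u i : ℕ) with hv
        have hvn : v < n := (u i).isLt
        have := ih v (by omega) ⟨v, hvn⟩ rfl
        have h2 : u i = u ⟨v, hvn⟩ := by
          rw [this]
        have h3 : i = ⟨v, hvn⟩ := u.injective h2
        have h4 : (i:ℕ) = v := congrArg Fin.val h3
        omega
      · exact Fin.ext heq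
  exact Equiv.ext fun i => key (i:ℕ) i rfl

lemma strictMono_eq_one (u : Perm (Fin n)) (h : ∀ p q : Fin n, p < q → u p < u q) :
    u = 1 := by
  have hmono : ∀ m : ℕ, ∀ i : Fin n, (i:ℕ) = m → (m:ℕ) ≤ (u i : ℕ) := by
    intro m
    induction m with
    | zero => intro i _; omega
    | succ m ih =>
      intro i him
      have hm : m < n := by omega
      have h1 := ih ⟨m, hm⟩ rfl
      have h2 : u ⟨m, hm⟩ < u i := by
        apply h
        show m < (i:ℕ)
        omega
      have h2' : (u ⟨m, hm⟩ : ℕ) < (u i : ℕ) := h2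
      omega
  -- so (i:ℕ) ≤ u i for all i; apply to u⁻¹ as well
  have hinv : ∀ p q : Fin n, p < q → u⁻¹ p < u⁻¹ q := by
    intro p q hpq
    rcases lt_trichotomy (u⁻¹ p) (u⁻¹ q) with hc | hc | hc
    · exact hc
    · exfalso; rw [show p = q from by rw [← (by exact u.apply_symm_apply p : u (u⁻¹ p) = p), ← (by exact u.apply_symm_apply q : u (u⁻¹ q) = q), hc]] at hpq
      exact absurd hpq (lt_irrefl _)
    · exfalso
      have := h _ _ hc
      rw [(by exact u.apply_symm_apply p : u (u⁻¹ p) = p), (by exact u.apply_symm_apply q : u (u⁻¹ q) = q)] at this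
      exact absurd (hpq.trans this) (lt_irrefl _)
  have hmono' : ∀ m : ℕ, ∀ i : Fin n, (i:ℕ) = m → (m:ℕ) ≤ (u⁻¹ i : ℕ) := by
    intro m
    induction m with
    | zero => intro i _; omega
    | succ m ih =>
      intro i him
      have hm : m < n := by omega
      have h1 := ih ⟨m, hm⟩ rfl
      have h2 : u⁻¹ ⟨m, hm⟩ < u⁻¹ i := by
        apply hinv
        show m < (i:ℕ)
        omega
      have h2' : (u⁻¹ ⟨m, hm⟩ : ℕ) < (u⁻¹ i : ℕ) := h2
      omega
  apply perm_eq_one_of_le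
  intro i
  have := hmono' (u i : ℕ) (u i) rfl
  rw [(by exact u.symm_apply_apply i : u⁻¹ (u i) = i)] at this
  exact this

lemma eq_one_of_len_zero (u : Perm (Fin n)) (h : len u = 0) : u = 1 := by
  apply strictMono_eq_one
  intro p q hpq
  rcases lt_trichotomy (u p) (u q) with hc | hc | hc
  · exact hc
  · exact absurd (u.injective hc) (by intro he; rw [he] at hpq; exact absurd hpq (lt_irrefl _))
  · exfalso
    have : ((p, q) : Fin n × Fin n) ∈ Finset.univ.filter
        (fun p : Fin n × Fin n => p.1 < p.2 ∧ u p.2 < u p.1) := by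
      simp only [Finset.mem_filter, Finset.mem_univ, true_and]
      exact ⟨hpq, hc⟩
    have h0 : (Finset.univ.filter
        (fun p : Fin n × Fin n => p.1 < p.2 ∧ u p.2 < u p.1)).card = 0 := h
    rw [Finset.card_eq_zero] at h0
    rw [h0] at this
    exact absurd this (Finset.notMem_empty _)

lemma exists_adj_descent (u : Perm (Fin n)) (hu : u ≠ 1) :
    ∃ (a : Fin n) (ha : (a:ℕ)+1 < n), u ⟨(a:ℕ)+1, ha⟩ < u a := by
  by_contra hcon
  push_neg at hcon
  apply hu
  apply strictMono_eq_one
  have hadj : ∀ (x : ℕ) (hx : x + 1 < n), u ⟨x, by omega⟩ < u ⟨x+1, hx⟩ := by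
    intro x hx
    have h1 := hcon ⟨x, by omega⟩ hx
    rcases lt_trichotomy (u ⟨x, by omega⟩) (u ⟨x+1, hx⟩) with hc | hc | hc
    · exact hc
    · exfalso
      have := u.injective hc
      have : x = x + 1 := congrArg Fin.val this
      omega
    · exact absurd hc (not_lt.mpr h1)
  have key : ∀ (d : ℕ) (p q : Fin n), (q:ℕ) = (p:ℕ) + d + 1 → u p < u q := by
    intro d
    induction d with
    | zero =>
      intro p q hq
      have hx : (p:ℕ) + 1 < n := by have := q.isLt; omega
      have := hadj (p:ℕ) hx
      have hp : (⟨(p:ℕ), by omega⟩ : Fin n) = p := Fin.ext rfl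
      have hq' : (⟨(p:ℕ)+1, hx⟩ : Fin n) = q := Fin.ext (by show (p:ℕ)+1 = (q:ℕ); omega)
      rwa [hp, hq'] at this
    | succ d ih =>
      intro p q hq
      have hq1 : (q:ℕ) ≥ 1 := by omega
      have hqn : (q:ℕ) - 1 + 1 < n := by have := q.isLt; omega
      set q' : Fin n := ⟨(q:ℕ) - 1, by omega⟩ with hq'
      have h1 : u p < u q' := ih p q' (by show (q:ℕ)-1 = (p:ℕ)+d+1; omega)
      have h2 := hadj ((q:ℕ) - 1) hqn
      have he1 : (⟨(q:ℕ)-1, by omega⟩ : Fin n) = q' := Fin.ext rfl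
      have he2 : (⟨(q:ℕ)-1+1, hqn⟩ : Fin n) = q := Fin.ext (by show (q:ℕ)-1+1 = (q:ℕ); omega)
      rw [he1, he2] at h2
      exact h1.trans h2
  intro p q hpq
  have hpq' : (p:ℕ) < (q:ℕ) := hpq
  exact key ((q:ℕ) - (p:ℕ) - 1) p q (by omega)

lemma bruhatLE_one (z : Perm (Fin n)) (h : BruhatLE z 1) : z = 1 := by
  apply perm_eq_one_of_le
  intro i
  have hi : (i:ℕ) + 1 ≤ n := i.isLt
  have hh := h ((i:ℕ)+1) hi ((i:ℕ)+1) hi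
  unfold rk at hh
  set C : Finset (Fin n) := Finset.univ.filter (fun k : Fin n => (k:ℕ)+1 ≤ (i:ℕ)+1) with hC
  have h1 : Finset.univ.filter
      (fun k : Fin n => (k:ℕ)+1 ≤ (i:ℕ)+1 ∧ (((1 : Perm (Fin n)) k : Fin n):ℕ)+1 ≤ (i:ℕ)+1) = C := by
    rw [hC]
    apply Finset.filter_congr
    intro k _
    simp only [Perm.one_apply, and_self]
  have h2 : Finset.univ.filter
      (fun k : Fin n => (k:ℕ)+1 ≤ (i:ℕ)+1 ∧ ((z k : Fin n):ℕ)+1 ≤ (i:ℕ)+1) ⊆ C := by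
    intro k hk
    simp only [Finset.mem_filter, Finset.mem_univ, true_and, hC] at hk ⊢
    exact hk.1
  rw [h1] at hh
  have h3 := Finset.eq_of_subset_of_card_le h2 hh
  have h4 : i ∈ Finset.univ.filter
      (fun k : Fin n => (k:ℕ)+1 ≤ (i:ℕ)+1 ∧ ((z k : Fin n):ℕ)+1 ≤ (i:ℕ)+1) := by
    rw [h3, hC]
    simp only [Finset.mem_filter, Finset.mem_univ, true_and]
    omega
  simp only [Finset.mem_filter, Finset.mem_univ, true_and] at h4
  omega


section Lift
variable {w z : Perm (Fin n)}

lemma lifting_desc (w z : Perm (Fin n)) (a : Fin n) (ha : (a:ℕ)+1 < n)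
    (hw : w ⟨(a:ℕ)+1, ha⟩ < w a) (hz : BruhatLE z w)
    (hzd : z ⟨(a:ℕ)+1, ha⟩ < z a) :
    BruhatLE (z * Equiv.swap a ⟨(a:ℕ)+1, ha⟩) (w * Equiv.swap a ⟨(a:ℕ)+1, ha⟩) := by
  intro i hi j hj
  by_cases hia : i = (a:ℕ)+1
  · subst hia
    rw [rk_mul_adjswap_row w a ha j, rk_mul_adjswap_row z a ha j]
    have H1 := hz (a:ℕ) (by omega) j hj
    have H2 := hz ((a:ℕ)+2) (by omega) j hj
    have E1 := rk_succ w a j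
    have E2 := rk_succ z a j
    have E3 := rk_succ w ⟨(a:ℕ)+1, ha⟩ j
    have E4 := rk_succ z ⟨(a:ℕ)+1, ha⟩ j
    have hb : ((⟨(a:ℕ)+1, ha⟩ : Fin n) : ℕ) = (a:ℕ)+1 := rfl
    rw [hb] at E3 E4
    have h11 : (a:ℕ)+1+1 = (a:ℕ)+2 := rfl
    rw [h11] at E3 E4
    rw [E1] at E3
    rw [E2] at E4
    rw [E3, E4] at H2
    have hzv : (z ⟨(a:ℕ)+1, ha⟩ : ℕ) < (z a : ℕ) := hzd
    have hwv : (w ⟨(a:ℕ)+1, ha⟩ : ℕ) < (w a : ℕ) := hw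
    split_ifs at H2 ⊢ <;> omega
  · have hi' : i ≤ (a:ℕ) ∨ (a:ℕ)+2 ≤ i := by omega
    rw [rk_mul_adjswap w a ha i j hi', rk_mul_adjswap z a ha i j hi']
    exact hz i hi j hj

lemma lifting_asc (w z : Perm (Fin n)) (a : Fin n) (ha : (a:ℕ)+1 < n)
    (hw : w ⟨(a:ℕ)+1, ha⟩ < w a) (hz : BruhatLE z w)
    (hza : z a < z ⟨(a:ℕ)+1, ha⟩) :
    BruhatLE z (w * Equiv.swap a ⟨(a:ℕ)+1, ha⟩) := by
  intro i hi j hj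
  by_cases hia : i = (a:ℕ)+1
  · subst hia
    rw [rk_mul_adjswap_row w a ha j]
    have H1 := hz (a:ℕ) (by omega) j hj
    have H2 := hz ((a:ℕ)+2) (by omega) j hj
    have E1 := rk_succ w a j
    have E2 := rk_succ z a j
    have E3 := rk_succ w ⟨(a:ℕ)+1, ha⟩ j
    have E4 := rk_succ z ⟨(a:ℕ)+1, ha⟩ j
    have hb : ((⟨(a:ℕ)+1, ha⟩ : Fin n) : ℕ) = (a:ℕ)+1 := rfl
    rw [hb] at E3 E4
    have h11 : (a:ℕ)+1+1 = (a:ℕ)+2 := rfl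
    rw [h11] at E3 E4
    rw [E1] at E3
    rw [E2] at E4
    rw [E3, E4] at H2
    have hzv : (z a : ℕ) < (z ⟨(a:ℕ)+1, ha⟩ : ℕ) := hza
    have hwv : (w ⟨(a:ℕ)+1, ha⟩ : ℕ) < (w a : ℕ) := hw
    rw [E2]
    split_ifs at H2 ⊢ <;> omega
  · have hi' : i ≤ (a:ℕ) ∨ (a:ℕ)+2 ≤ i := by omega
    rw [rk_mul_adjswap w a ha i j hi']
    exact hz i hi j hj

end Lift

section Cover

lemma bruhat_len (N : ℕ) : ∀ w z : Perm (Fin n), len w = N → BruhatLE z w →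
    len z ≤ len w ∧ (len z = len w → z = w) := by
  induction N using Nat.strong_induction_on with
  | _ N ih =>
    intro w z hN hz
    by_cases hw1 : w = 1
    · subst hw1
      have := bruhatLE_one z hz
      subst this
      exact ⟨le_rfl, fun _ => rfl⟩
    · obtain ⟨a, ha, hd⟩ := exists_adj_descent w hw1
      set b : Fin n := ⟨(a:ℕ)+1, ha⟩ with hbdef
      have hab : a < b := by show (a:ℕ) < (a:ℕ)+1; omega
      have hadj : (b:ℕ) = (a:ℕ)+1 := rfl
      have hws : len (w * Equiv.swap a b) + 1 = len w := len_mul_adj_descent hab hadj hd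
      have hwsN : len (w * Equiv.swap a b) < N := by omega
      rcases lt_trichotomy (z b) (z a) with hc | hc | hc
      · have hlift := lifting_desc w z a ha hd hz hc
        have hzs : len (z * Equiv.swap a b) + 1 = len z := len_mul_adj_descent hab hadj hc
        obtain ⟨ihle, iheq⟩ := ih _ hwsN (w * Equiv.swap a b) (z * Equiv.swap a b) rfl hlift
        constructor
        · omega
        · intro he
          have : z * Equiv.swap a b = w * Equiv.swap a b := iheq (by omega)
          exact mul_right_cancel this
      · exact absurd (congrArg Fin.val (z.injective hc)) (by show ¬(a:ℕ)+1 = (a:ℕ); omega)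
      · have hlift := lifting_asc w z a ha hd hz hc
        obtain ⟨ihle, _⟩ := ih _ hwsN (w * Equiv.swap a b) z rfl hlift
        exact ⟨by omega, fun he => absurd he (by omega)⟩

lemma bruhat_len_le {w z : Perm (Fin n)} (hz : BruhatLE z w) : len z ≤ len w :=
  (bruhat_len (len w) w z rfl hz).1

lemma bruhat_len_eq {w z : Perm (Fin n)} (hz : BruhatLE z w) (h : len z = len w) : z = w :=
  (bruhat_len (len w) w z rfl hz).2 h

lemma cover_exists (N : ℕ) : ∀ w z : Perm (Fin n), len w = N → BruhatLE z w →
    len z + 1 = len w →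
    ∃ i j : Fin n, i < j ∧ w j < w i ∧ z = w * Equiv.swap i j := by
  induction N using Nat.strong_induction_on with
  | _ N ih =>
    intro w z hN hz hlen
    by_cases hw1 : w = 1
    · exfalso
      subst hw1
      have := bruhatLE_one z hz
      subst this
      omega
    · obtain ⟨a, ha, hd⟩ := exists_adj_descent w hw1
      set b : Fin n := ⟨(a:ℕ)+1, ha⟩ with hbdef
      have hab : a < b := by show (a:ℕ) < (a:ℕ)+1; omega
      have hadj : (b:ℕ) = (a:ℕ)+1 := rfl
      have hws : len (w * Equiv.swap a b) + 1 = len w := len_mul_adj_descent hab hadj hd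
      have hwsN : len (w * Equiv.swap a b) < N := by omega
      rcases lt_trichotomy (z b) (z a) with hc | hc | hc
      · have hlift := lifting_desc w z a ha hd hz hc
        have hzs : len (z * Equiv.swap a b) + 1 = len z := len_mul_adj_descent hab hadj hc
        obtain ⟨i, j, hij, hdij, heq⟩ := ih _ hwsN (w * Equiv.swap a b)
          (z * Equiv.swap a b) rfl hlift (by omega)
        -- z = w * swap (s i) (s j)
        set s : Perm (Fin n) := Equiv.swap a b with hsdef
        have hz_eq : z = w * (s * Equiv.swap i j * s) := by
          have h1 : z = (z * s) * s := by
            rw [mul_assoc, Equiv.swap_mul_self, mul_one]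
          rw [h1, heq]
          group
        have hsinv : s⁻¹ = s := by rw [hsdef]; exact Equiv.swap_inv a b
        have hconj : s * Equiv.swap i j * s = Equiv.swap (s i) (s j) := by
          rw [Equiv.swap_apply_apply, hsinv]
        rw [hconj] at hz_eq
        have hne : s i ≠ s j := fun hcc => absurd (s.injective hcc)
          (fun hcc' => absurd (hcc' ▸ hij) (lt_irrefl _))
        have hlzw : len z < len w := by omega
        rcases lt_trichotomy (s i) (s j) with hor | hor | hor
        · refine ⟨s i, s j, hor, ?_, hz_eq⟩
          rcases lt_trichotomy (w (s j)) (w (s i))  with hv | hv | hv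
          · exact hv
          · exact absurd (w.injective hv) (Ne.symm hne)
          · exfalso
            have := len_lt_of_ascent hor hv
            rw [← hz_eq] at this
            omega
        · exact absurd hor hne
        · refine ⟨s j, s i, hor, ?_, by rw [hz_eq, Equiv.swap_comm]⟩
          rcases lt_trichotomy (w (s i)) (w (s j)) with hv | hv | hv
          · exact hv
          · exact absurd (w.injective hv) hne
          · exfalso
            have := len_lt_of_ascent hor hv
            rw [← Equiv.swap_comm, ← hz_eq] at this
            omega
      · exact absurd (congrArg Fin.val (z.injective hc)) (by show ¬(a:ℕ)+1 = (a:ℕ); omega)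
      · have hlift := lifting_asc w z a ha hd hz hc
        have : len z = len (w * Equiv.swap a b) := by
          have h1 := bruhat_len_le hlift
          omega
        have := bruhat_len_eq hlift this
        exact ⟨a, b, hab, hd, this⟩

lemma cover_no_mid {w : Perm (Fin n)} {i j : Fin n} (hij : i < j) (hd : w j < w i)
    (hlen : len (w * Equiv.swap i j) + 1 = len w) (k : Fin n)
    (hik : i < k) (hkj : k < j) : ¬ (w j < w k ∧ w k < w i) := by
  rintro ⟨h1, h2⟩
  have := len_lt3_of_descent hij hd k hik hkj h1 h2
  omega

end Cover

section Final

lemma desc_of_LT_mul (z : Perm (Fin n)) (a : Fin n) (ha : (a:ℕ)+1 < n)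
    (h : BruhatLT (z * Equiv.swap a ⟨(a:ℕ)+1, ha⟩) z) : z ⟨(a:ℕ)+1, ha⟩ < z a := by
  rcases lt_trichotomy (z ⟨(a:ℕ)+1, ha⟩) (z a) with hc | hc | hc
  · exact hc
  · exact absurd (congrArg Fin.val (z.injective hc)) (by show ¬(a:ℕ)+1 = (a:ℕ); omega)
  · exfalso
    have hj : (z a : ℕ) + 1 ≤ n := (z a).isLt
    have H := h.1 ((a:ℕ)+1) (by omega) ((z a : ℕ)+1) hj
    rw [rk_mul_adjswap_row z a ha] at H
    have E2 := rk_succ z a ((z a : ℕ)+1)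
    have hc' : (z a : ℕ) < (z ⟨(a:ℕ)+1, ha⟩ : ℕ) := hc
    rw [E2] at H
    split_ifs at H <;> omega

lemma asc_of_LT_mul (w : Perm (Fin n)) (a : Fin n) (ha : (a:ℕ)+1 < n)
    (h : BruhatLT w (w * Equiv.swap a ⟨(a:ℕ)+1, ha⟩)) : w a < w ⟨(a:ℕ)+1, ha⟩ := by
  rcases lt_trichotomy (w a) (w ⟨(a:ℕ)+1, ha⟩) with hc | hc | hc
  · exact hc
  · exact absurd (congrArg Fin.val (w.injective hc)) (by show ¬(a:ℕ) = (a:ℕ)+1; omega)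
  · exfalso
    have hj : (w ⟨(a:ℕ)+1, ha⟩ : ℕ) + 1 ≤ n := (w ⟨(a:ℕ)+1, ha⟩).isLt
    have H := h.1 ((a:ℕ)+1) (by omega) ((w ⟨(a:ℕ)+1, ha⟩ : ℕ)+1) hj
    rw [rk_mul_adjswap_row w a ha] at H
    have E2 := rk_succ w a ((w ⟨(a:ℕ)+1, ha⟩ : ℕ)+1)
    have hc' : (w ⟨(a:ℕ)+1, ha⟩ : ℕ) < (w a : ℕ) := hc
    rw [E2] at H
    split_ifs at H <;> omega

lemma classify (w : Perm (Fin n)) (l : Fin n) (hl : (l:ℕ)+1 < n)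
    (hwa : w l < w ⟨(l:ℕ)+1, hl⟩) (i j : Fin n) (hij : i < j) (hd : w j < w i)
    (hzd : (w * Equiv.swap i j) ⟨(l:ℕ)+1, hl⟩ < (w * Equiv.swap i j) l) :
    (j = l ∧ i < l ∧ w ⟨(l:ℕ)+1, hl⟩ < w i) ∨
    (i = ⟨(l:ℕ)+1, hl⟩ ∧ (⟨(l:ℕ)+1, hl⟩ : Fin n) < j ∧ w j < w l) := by
  have hij' : (i:ℕ) < (j:ℕ) := hij
  simp only [Perm.mul_apply] at hzd
  by_cases hjl : j = l
  · have hjl' : (j:ℕ) = (l:ℕ) := congrArg Fin.val hjl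
    have htl : (Equiv.swap i j) l = i := by rw [← hjl]; exact Equiv.swap_apply_right i j
    have htb : (Equiv.swap i j) ⟨(l:ℕ)+1, hl⟩ = ⟨(l:ℕ)+1, hl⟩ := by
      apply Equiv.swap_apply_of_ne_of_ne
      · exact Fin.ne_of_val_ne (by show (l:ℕ)+1 ≠ (i:ℕ); omega)
      · exact Fin.ne_of_val_ne (by show (l:ℕ)+1 ≠ (j:ℕ); omega)
    rw [htl, htb] at hzd
    exact Or.inl ⟨hjl, by show (i:ℕ) < (l:ℕ); omega, hzd⟩
  · have hjl' : (j:ℕ) ≠ (l:ℕ) := fun hc => hjl (Fin.ext hc)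
    by_cases hib : i = (⟨(l:ℕ)+1, hl⟩ : Fin n)
    · have hib' : (i:ℕ) = (l:ℕ)+1 := congrArg Fin.val hib
      have htb : (Equiv.swap i j) ⟨(l:ℕ)+1, hl⟩ = j := by
        rw [← hib]; exact Equiv.swap_apply_left i j
      have htl : (Equiv.swap i j) l = l := by
        apply Equiv.swap_apply_of_ne_of_ne
        · exact Fin.ne_of_val_ne (by show (l:ℕ) ≠ (i:ℕ); omega)
        · exact Fin.ne_of_val_ne (by show (l:ℕ) ≠ (j:ℕ); omega)
      rw [htb, htl] at hzd
      exact Or.inr ⟨hib, by show (l:ℕ)+1 < (j:ℕ); omega, hzd⟩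
    · exfalso
      have hib' : (i:ℕ) ≠ (l:ℕ)+1 := fun hc => hib (Fin.ext hc)
      by_cases hil : i = l
      · have hil' : (i:ℕ) = (l:ℕ) := congrArg Fin.val hil
        by_cases hjb : j = (⟨(l:ℕ)+1, hl⟩ : Fin n)
        · rw [hil, hjb] at hd
          exact absurd (hwa.trans hd) (lt_irrefl _)
        · have hjb' : (j:ℕ) ≠ (l:ℕ)+1 := fun hc => hjb (Fin.ext hc)
          have htl : (Equiv.swap i j) l = j := by
            rw [← hil]; exact Equiv.swap_apply_left i j
          have htb : (Equiv.swap i j) ⟨(l:ℕ)+1, hl⟩ = ⟨(l:ℕ)+1, hl⟩ := by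
            apply Equiv.swap_apply_of_ne_of_ne
            · exact Fin.ne_of_val_ne (by show (l:ℕ)+1 ≠ (i:ℕ); omega)
            · exact Fin.ne_of_val_ne (by show (l:ℕ)+1 ≠ (j:ℕ); omega)
          rw [htl, htb] at hzd
          rw [hil] at hd
          exact absurd ((hzd.trans hd).trans hwa) (lt_irrefl _)
      · have hil' : (i:ℕ) ≠ (l:ℕ) := fun hc => hil (Fin.ext hc)
        by_cases hjb : j = (⟨(l:ℕ)+1, hl⟩ : Fin n)
        · have hjb' : (j:ℕ) = (l:ℕ)+1 := congrArg Fin.val hjb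
          have htb : (Equiv.swap i j) ⟨(l:ℕ)+1, hl⟩ = i := by
            rw [← hjb]; exact Equiv.swap_apply_right i j
          have htl : (Equiv.swap i j) l = l := by
            apply Equiv.swap_apply_of_ne_of_ne
            · exact Fin.ne_of_val_ne (by show (l:ℕ) ≠ (i:ℕ); omega)
            · exact Fin.ne_of_val_ne (by show (l:ℕ) ≠ (j:ℕ); omega)
          rw [htb, htl] at hzd
          rw [hjb] at hd
          exact absurd ((hd.trans hzd).trans hwa) (lt_irrefl _)
        · have hjb' : (j:ℕ) ≠ (l:ℕ)+1 := fun hc => hjb (Fin.ext hc)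
          have htl : (Equiv.swap i j) l = l := by
            apply Equiv.swap_apply_of_ne_of_ne
            · exact Fin.ne_of_val_ne (by show (l:ℕ) ≠ (i:ℕ); omega)
            · exact Fin.ne_of_val_ne (by show (l:ℕ) ≠ (j:ℕ); omega)
          have htb : (Equiv.swap i j) ⟨(l:ℕ)+1, hl⟩ = ⟨(l:ℕ)+1, hl⟩ := by
            apply Equiv.swap_apply_of_ne_of_ne
            · exact Fin.ne_of_val_ne (by show (l:ℕ)+1 ≠ (i:ℕ); omega)
            · exact Fin.ne_of_val_ne (by show (l:ℕ)+1 ≠ (j:ℕ); omega)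
          rw [htl, htb] at hzd
          exact absurd (hzd.trans hwa) (lt_irrefl _)

end Final

end S4
/-- For smooth `w` with `sw < w < ws`, at most one `z` is covered by `w`
with `zs < z`. -/
theorem stmt4 {n : ℕ} (w : Equiv.Perm (Fin n)) (hw : SmoothPerm w)
    (l : Fin n) (hl : (l : ℕ) + 1 < n)
    (s : Equiv.Perm (Fin n)) (hs : s = Equiv.swap l ⟨(l : ℕ) + 1, hl⟩)
    (h1 : BruhatLT (s * w) w) (h2 : BruhatLT w (w * s)) :
    ∀ z z' : Equiv.Perm (Fin n),
      BruhatLE z w → len z + 1 = len w → BruhatLT (z * s) z →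
      BruhatLE z' w → len z' + 1 = len w → BruhatLT (z' * s) z' →
      z = z' := by
  intro z z' hzle hzlen hzs hzle' hzlen' hzs'
  subst hs
  have hwa : w l < w ⟨(l:ℕ)+1, hl⟩ := S4.asc_of_LT_mul w l hl h2
  have hzd : z ⟨(l:ℕ)+1, hl⟩ < z l := S4.desc_of_LT_mul z l hl hzs
  have hzd' : z' ⟨(l:ℕ)+1, hl⟩ < z' l := S4.desc_of_LT_mul z' l hl hzs'
  obtain ⟨i, j, hij, hd, hzeq⟩ := S4.cover_exists (len w) w z rfl hzle hzlen
  obtain ⟨i', j', hij', hd', hzeq'⟩ := S4.cover_exists (len w) w z' rfl hzle' hzlen'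
  have hlen2 : len (w * Equiv.swap i j) + 1 = len w := by rw [← hzeq]; exact hzlen
  have hlen2' : len (w * Equiv.swap i' j') + 1 = len w := by rw [← hzeq']; exact hzlen'
  have hnm : ∀ k, i < k → k < j → ¬ (w j < w k ∧ w k < w i) :=
    fun k hik hkj => S4.cover_no_mid hij hd hlen2 k hik hkj
  have hnm' : ∀ k, i' < k → k < j' → ¬ (w j' < w k ∧ w k < w i') :=
    fun k hik hkj => S4.cover_no_mid hij' hd' hlen2' k hik hkj
  rw [hzeq] at hzd
  rw [hzeq'] at hzd'
  have hlb : l < (⟨(l:ℕ)+1, hl⟩ : Fin n) := by show (l:ℕ) < (l:ℕ)+1; omega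
  rcases S4.classify w l hl hwa i j hij hd hzd with ⟨hjl, hil, hB⟩ | ⟨hib, hbj, hD⟩ <;>
    rcases S4.classify w l hl hwa i' j' hij' hd' hzd' with ⟨hjl2, hil2, hB2⟩ | ⟨hib2, hbj2, hD2⟩
  · -- both type B
    rcases lt_trichotomy i i' with hc | hc | hc
    · exfalso
      apply hw.1
      have hmid := hnm i' hc (by rw [hjl]; exact hil2)
      have hii : w i < w i' := by
        rcases lt_trichotomy (w i) (w i') with hv | hv | hv
        · exact hv
        · exact absurd (w.injective hv) (fun he => absurd (he ▸ hc) (lt_irrefl _))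
        · exact absurd ⟨by rw [hjl]; exact hwa.trans hB2, hv⟩ hmid
      exact ⟨i, i', l, ⟨(l:ℕ)+1, hl⟩, hc, hil2, hlb, hwa, hB, hii⟩
    · rw [hzeq, hzeq', hjl, hjl2, hc]
    · exfalso
      apply hw.1
      have hmid := hnm' i hc (by rw [hjl2]; exact hil)
      have hii : w i' < w i := by
        rcases lt_trichotomy (w i') (w i) with hv | hv | hv
        · exact hv
        · exact absurd (w.injective hv) (fun he => absurd (he ▸ hc) (lt_irrefl _))
        · exact absurd ⟨by rw [hjl2]; exact hwa.trans hB, hv⟩ hmid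
      exact ⟨i', i, l, ⟨(l:ℕ)+1, hl⟩, hc, hil, hlb, hwa, hB2, hii⟩
  · -- z type B, z' type D : pattern 4231
    exfalso
    apply hw.2
    exact ⟨i, l, ⟨(l:ℕ)+1, hl⟩, j', hil, hlb, hbj2, hD2, hwa, hB⟩
  · -- z type D, z' type B : pattern 4231
    exfalso
    apply hw.2
    exact ⟨i', l, ⟨(l:ℕ)+1, hl⟩, j, hil2, hlb, hbj, hD, hwa, hB2⟩
  · -- both type D
    rcases lt_trichotomy j j' with hc | hc | hc
    · exfalso
      apply hw.1
      have hmid := hnm' j (by rw [hib2]; exact hbj) hc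
      have hjj : w j < w j' := by
        rcases lt_trichotomy (w j) (w j') with hv | hv | hv
        · exact hv
        · exact absurd (w.injective hv) (fun he => absurd (he ▸ hc) (lt_irrefl _))
        · exact absurd ⟨hv, by rw [hib2]; exact hD.trans hwa⟩ hmid
      exact ⟨l, ⟨(l:ℕ)+1, hl⟩, j, j', hlb, hbj, hc, hjj, hD2, hwa⟩
    · rw [hzeq, hzeq', hib, hib2, hc]
    · exfalso
      apply hw.1
      have hmid := hnm j' (by rw [hib]; exact hbj2) hc
      have hjj : w j' < w j := by
        rcases lt_trichotomy (w j') (w j) with hv | hv | hv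
        · exact hv
        · exact absurd (w.injective hv) (fun he => absurd (he ▸ hc) (lt_irrefl _))
        · exact absurd ⟨hv, by rw [hib]; exact hD2.trans hwa⟩ hmid
      exact ⟨l, ⟨(l:ℕ)+1, hl⟩, j', j, hlb, hbj2, hc, hjj, hD, hwa⟩
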